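/- Let h>0, α,β∈(0,1], d≥1, let A be a real d×d matrix and x_a, x_0∈ℝ^d. Then the unique solution of the linear sequential Caputo initial value problem (C_β(C_α X))(n) = A·X(n), X(0)=x_a, (C_α X)(0)=x_0 is given for every n∈ℕ by the (finite) series X(n) = ∑_{k=0}^{n} A^k·( φ_{k,k}(n−k)·x_a + φ_{k+1,k}(n−k)·x_0 ), where all terms with 2k>n vanish because φ_{k,k}(n−k)=0 for n<2k and φ_{k+1,k}(n−k)=0 for n<2k+1. -/

import Mathlib

/-- `c γ m = Γ(γ+m)/(Γ(γ)·Γ(m+1))`. -/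
noncomputable def cCoeff (γ : ℝ) (m : ℕ) : ℝ :=
  Real.Gamma (γ + m) / (Real.Gamma γ * Real.Gamma (m + 1))

/-- Caputo `h`-difference of order `α ∈ (0,1]` of an `ℝ^d`-valued sequence. -/
noncomputable def caputo (h α : ℝ) {d : ℕ} (u : ℕ → Fin d → ℝ) (n : ℕ) : Fin d → ℝ :=
  if α < 1 then
    h ^ (1 - α) • ∑ k ∈ Finset.range (n + 1), cCoeff (1 - α) (n - k) • (h⁻¹ • (u (k + 1) - u k))
  else h⁻¹ • (u (n + 1) - u n)

/-- `X` solves the sequential Caputo initial value problem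
`(C_β(C_α X))(n) = f(n, X(n))`, `X(0) = x_a`, `(C_α X)(0) = x_0`. -/
noncomputable def IsSolIVP (h α β : ℝ) {d : ℕ} (f : ℕ → (Fin d → ℝ) → Fin d → ℝ)
    (xa x0 : Fin d → ℝ) (X : ℕ → Fin d → ℝ) : Prop :=
  (∀ n : ℕ, caputo h β (caputo h α X) n = f n (X n)) ∧ X 0 = xa ∧ caputo h α X 0 = x0

/-- The function `φ_{k,s}` of the paper. -/
noncomputable def phi (h α β : ℝ) (k s : ℕ) (n : ℤ) : ℝ :=
  if (k : ℤ) ≤ n then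
    Real.Gamma ((n : ℝ) - (k : ℝ) + 1 + (k : ℝ) * α + (s : ℝ) * β)
      / (Real.Gamma ((k : ℝ) * α + (s : ℝ) * β + 1) * Real.Gamma ((n : ℝ) - (k : ℝ) + 1))
      * h ^ ((k : ℝ) * α + (s : ℝ) * β)
  else 0

open Finset

noncomputable def cC (a : ℝ) (m : ℕ) : ℝ :=
  Real.Gamma (a + m) / (Real.Gamma a * m.factorial)

lemma cC_zero (a : ℝ) (ha : 0 < a) : cC a 0 = 1 := by
  simp [cC, div_self (ne_of_gt (Real.Gamma_pos_of_pos ha))]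

lemma cC_succ_mul (a : ℝ) (ha : 0 < a) (i : ℕ) :
    ((i : ℝ) + 1) * cC a (i + 1) = a * cC (a + 1) i := by
  have hG : Real.Gamma (a + 1) = a * Real.Gamma a := Real.Gamma_add_one (ne_of_gt ha)
  have hGa : Real.Gamma a ≠ 0 := ne_of_gt (Real.Gamma_pos_of_pos ha)
  have h1 : (a + ((i : ℝ) + 1)) = (a + 1) + i := by ring
  simp only [cC, Nat.cast_add, Nat.cast_one, Nat.factorial_succ, Nat.cast_mul, h1, hG]
  have hfac : (i.factorial : ℝ) ≠ 0 := Nat.cast_ne_zero.2 i.factorial_ne_zero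
  have hi : ((i:ℝ) + 1) ≠ 0 := by positivity
  field_simp

lemma vandermonde_gamma (m : ℕ) : ∀ (a b : ℝ), 0 < a → 0 < b →
    ∑ i ∈ range (m + 1), cC a i * cC b (m - i) = cC (a + b) m := by
  induction m with
  | zero =>
    intro a b ha hb
    simp [cC_zero _ ha, cC_zero _ hb, cC_zero _ (add_pos ha hb)]
  | succ m ih =>
    intro a b ha hb
    have hm1 : ((m:ℝ) + 1) ≠ 0 := by positivity
    apply mul_left_cancel₀ hm1
    have split : ((m:ℝ)+1) * ∑ i ∈ range (m + 1 + 1), cC a i * cC b (m + 1 - i)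
        = (∑ i ∈ range (m + 2), (i:ℝ) * cC a i * cC b (m + 1 - i))
          + ∑ i ∈ range (m + 2), ((m + 1 - i : ℕ):ℝ) * cC b (m + 1 - i) * cC a i := by
      rw [mul_sum, ← sum_add_distrib]
      apply sum_congr rfl
      intro i hi
      have hile : i ≤ m + 1 := by simpa [Nat.lt_succ_iff] using mem_range.1 hi
      have hcast : ((m + 1 - i : ℕ):ℝ) = (m:ℝ) + 1 - i := by
        push_cast [Nat.cast_sub hile]; ring
      rw [hcast]; ring
    rw [split]
    have hS1 : (∑ i ∈ range (m + 2), (i:ℝ) * cC a i * cC b (m + 1 - i))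
        = a * cC (a + 1 + b) m := by
      rw [Finset.sum_range_succ']
      simp only [Nat.cast_zero, zero_mul, zero_mul, add_zero, Nat.succ_sub_succ]
      have : ∀ i ∈ range (m+1), ((i:ℝ)+1) * cC a (i+1) * cC b (m - i)
          = a * (cC (a+1) i * cC b (m - i)) := by
        intro i _
        rw [cC_succ_mul a ha i]; ring
      rw [sum_congr rfl (by intro i hi; push_cast; exact this i hi), ← mul_sum,
        ih (a+1) b (by linarith) hb]
    have hS2 : (∑ i ∈ range (m + 2), ((m + 1 - i : ℕ):ℝ) * cC b (m + 1 - i) * cC a i)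
        = b * cC (a + (b + 1)) m := by
      rw [Finset.sum_range_succ]
      simp only [Nat.sub_self, Nat.cast_zero, zero_mul]
      have : ∀ i ∈ range (m+1), ((m + 1 - i : ℕ):ℝ) * cC b (m + 1 - i) * cC a i
          = b * (cC a i * cC (b+1) (m - i)) := by
        intro i hi
        have hile : i ≤ m := by simpa [Nat.lt_succ_iff] using mem_range.1 hi
        have h1 : m + 1 - i = (m - i) + 1 := by omega
        have h2 : ((m + 1 - i : ℕ):ℝ) = ((m - i : ℕ):ℝ) + 1 := by rw [h1]; push_cast; ring
        rw [h1]
        push_cast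
        rw [cC_succ_mul b hb (m - i)]; ring
      rw [sum_congr rfl this, ← mul_sum, add_zero, ih a (b+1) ha (by linarith)]
    rw [hS1, hS2]
    have hRHS : ((m:ℝ)+1) * cC (a + b) (m + 1) = (a + b) * cC (a + b + 1) m :=
      cC_succ_mul (a+b) (add_pos ha hb) m
    rw [hRHS]
    have : a + (b+1) = a + b + 1 := by ring
    rw [this]
    have : a + 1 + b = a + b + 1 := by ring
    rw [this]
    ring

lemma cCoeff_eq_cC (γ : ℝ) (m : ℕ) : cCoeff γ m = cC γ m := by
  rw [cCoeff, cC, Real.Gamma_nat_eq_factorial]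

/-- scalar Caputo difference -/
noncomputable def caputoS (h α : ℝ) (u : ℕ → ℝ) (n : ℕ) : ℝ :=
  if α < 1 then
    h ^ (1 - α) * ∑ k ∈ Finset.range (n + 1), cCoeff (1 - α) (n - k) * (h⁻¹ * (u (k + 1) - u k))
  else h⁻¹ * (u (n + 1) - u n)

lemma caputo_apply (h α : ℝ) {d : ℕ} (u : ℕ → Fin d → ℝ) (n : ℕ) (i : Fin d) :
    caputo h α u n i = caputoS h α (fun m => u m i) n := by
  unfold caputo caputoS
  split
  · simp [Finset.sum_apply, Finset.mul_sum]
  · simp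

lemma caputoS_congr (h α : ℝ) (u v : ℕ → ℝ) (n : ℕ) (hc : ∀ k ≤ n + 1, u k = v k) :
    caputoS h α u n = caputoS h α v n := by
  unfold caputoS
  split
  · congr 1
    apply sum_congr rfl
    intro k hk
    have hk' : k ≤ n := by simpa [Nat.lt_succ_iff] using mem_range.1 hk
    rw [hc k (by omega), hc (k+1) (by omega)]
  · rw [hc (n+1) (by omega), hc n (by omega)]

lemma caputoS_const (h α c : ℝ) (u : ℕ → ℝ) (hu : ∀ m, u m = c) (n : ℕ) :
    caputoS h α u n = 0 := by
  unfold caputoS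
  split <;> simp [hu]

lemma caputoS_linear (h α c1 c2 : ℝ) (p q : ℕ → ℝ) (n : ℕ) :
    caputoS h α (fun m => c1 * p m + c2 * q m) n
      = c1 * caputoS h α p n + c2 * caputoS h α q n := by
  unfold caputoS
  split
  · simp only []
    rw [show (∑ k ∈ range (n+1), cCoeff (1-α) (n-k) * (h⁻¹ * ((c1*p (k+1)+c2*q (k+1)) - (c1*p k + c2*q k))))
        = ∑ k ∈ range (n+1), (c1 * (cCoeff (1-α) (n-k) * (h⁻¹*(p (k+1)-p k)))
            + c2 * (cCoeff (1-α) (n-k) * (h⁻¹*(q (k+1)-q k))))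
        from sum_congr rfl (fun k _ => by ring),
      sum_add_distrib, ← mul_sum, ← mul_sum]
    ring
  · ring

lemma caputoS_sum (h α : ℝ) {ι : Type*} (s : Finset ι) (F : ι → ℕ → ℝ) (n : ℕ) :
    caputoS h α (fun m => ∑ k ∈ s, F k m) n = ∑ k ∈ s, caputoS h α (F k) n := by
  induction s using Finset.cons_induction with
  | empty => simp; exact caputoS_const h α 0 _ (fun _ => rfl) n
  | cons a s ha ih =>
    rw [Finset.sum_cons]
    have := caputoS_linear h α 1 1 (F a) (fun m => ∑ k ∈ s, F k m) n
    simp only [one_mul] at this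
    rw [show (fun m => ∑ k ∈ Finset.cons a s ha, F k m)
        = fun m => F a m + ∑ k ∈ s, F k m from funext fun m => Finset.sum_cons ha,
      this, ih]

lemma caputoS_top (h α : ℝ) (hh : 0 < h) (hα1 : 0 < α) (hα2 : α ≤ 1)
    (u v : ℕ → ℝ) (n : ℕ) (hagree : ∀ k ≤ n, u k = v k) :
    caputoS h α u n - caputoS h α v n = h ^ (-α) * (u (n + 1) - v (n + 1)) := by
  have hne : h ≠ 0 := ne_of_gt hh
  unfold caputoS
  split
  · rename_i hlt
    rw [← mul_sub, ← sum_sub_distrib]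
    have : ∀ k ∈ range (n+1), cCoeff (1-α) (n-k) * (h⁻¹ * (u (k+1) - u k))
        - cCoeff (1-α) (n-k) * (h⁻¹ * (v (k+1) - v k))
        = if k = n then cCoeff (1-α) 0 * (h⁻¹ * (u (n+1) - v (n+1))) else 0 := by
      intro k hk
      have hk' : k ≤ n := by simpa [Nat.lt_succ_iff] using mem_range.1 hk
      by_cases hkn : k = n
      · subst hkn
        rw [hagree k le_rfl]
        simp
        ring
      · rw [hagree k hk', hagree (k+1) (by omega)]
        simp [hkn]
    rw [sum_congr rfl this, Finset.sum_ite_eq' (range (n+1)) n]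
    have hmem : n ∈ range (n+1) := mem_range.2 (by omega)
    rw [if_pos hmem]
    have hc0 : cCoeff (1-α) 0 = 1 := by
      rw [cCoeff_eq_cC]
      simp [cC, div_self (ne_of_gt (Real.Gamma_pos_of_pos (by linarith : (0:ℝ) < 1 - α)))]
    rw [hc0]
    rw [show h⁻¹ = h ^ (-1 : ℝ) by rw [Real.rpow_neg_one]]
    rw [show h^(1-α) * (1*(h^(-1:ℝ)*(u (n+1) - v (n+1))))
        = (h^(1-α)*h^(-1:ℝ))*(u (n+1)-v (n+1)) from by ring, ← Real.rpow_add hh]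
    rw [show (1 - α + -1) = -α by ring]
  · rename_i hge
    have hα : α = 1 := le_antisymm hα2 (not_lt.1 hge)
    rw [hagree n le_rfl, hα]
    rw [show h⁻¹ = h ^ (-(1:ℝ)) by rw [Real.rpow_neg_one]]
    ring

lemma cC_sub (μ : ℝ) (hμ : 0 < μ) (m : ℕ) :
    cC (μ + 1) (m + 1) - cC (μ + 1) m = cC μ (m + 1) := by
  have hG : 0 < Real.Gamma (μ + m) := Real.Gamma_pos_of_pos (by positivity)
  have hGμ : 0 < Real.Gamma μ := Real.Gamma_pos_of_pos hμ
  have hA : Real.Gamma (μ + 1 + m) = (μ + m) * Real.Gamma (μ + m) := by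
    rw [show μ + 1 + (m:ℝ) = (μ + m) + 1 by ring, Real.Gamma_add_one (by positivity)]
  have hB : Real.Gamma (μ + 1 + ((m:ℕ)+1:ℕ)) = (μ + m + 1) * ((μ + m) * Real.Gamma (μ + m)) := by
    push_cast
    rw [show μ + 1 + ((m:ℝ) + 1) = (μ + 1 + m) + 1 by ring,
      Real.Gamma_add_one (by positivity), hA]
    ring
  have hC : Real.Gamma (μ + ((m:ℕ)+1:ℕ)) = (μ + m) * Real.Gamma (μ + m) := by
    push_cast
    rw [show μ + ((m:ℝ) + 1) = (μ + m) + 1 by ring, Real.Gamma_add_one (by positivity)]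
  have hD : Real.Gamma (μ + 1) = μ * Real.Gamma μ := Real.Gamma_add_one (ne_of_gt hμ)
  unfold cC
  rw [hA, hB, hC, hD, Nat.factorial_succ]
  have h1 : ((m+1).factorial : ℝ) ≠ 0 := by positivity
  have h2 : ((m).factorial : ℝ) ≠ 0 := by positivity
  push_cast
  field_simp
  ring

noncomputable def Em (h μ : ℝ) (j n : ℕ) : ℝ :=
  if j ≤ n then cC (μ + 1) (n - j) * h ^ μ else 0

lemma Em_diff (h μ : ℝ) (hh : 0 < h) (hμ : 0 < μ) (j k : ℕ) :
    h⁻¹ * (Em h μ (j+1) (k+1) - Em h μ (j+1) k)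
      = if j ≤ k then cC μ (k - j) * h ^ (μ - 1) else 0 := by
  have hinv : h⁻¹ = h ^ (-1:ℝ) := (Real.rpow_neg_one h).symm
  have hpow : h ^ (-1:ℝ) * h ^ μ = h ^ (μ - 1) := by
    rw [← Real.rpow_add hh]; ring_nf
  rcases lt_trichotomy k j with hkj | rfl | hjk
  · rw [if_neg (by omega)]
    unfold Em
    rw [if_neg (by omega), if_neg (by omega)]
    ring
  · rw [if_pos le_rfl]
    unfold Em
    rw [if_pos le_rfl, if_neg (by omega), Nat.sub_self, Nat.sub_self,
      cC_zero _ (by positivity), cC_zero _ hμ, hinv]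
    rw [sub_zero, one_mul, one_mul, hpow]
  · rw [if_pos (le_of_lt hjk)]
    unfold Em
    rw [if_pos (by omega), if_pos (by omega)]
    have e1 : k + 1 - (j + 1) = (k - j - 1) + 1 := by omega
    have e2 : k - (j + 1) = k - j - 1 := by omega
    have e3 : k - j = (k - j - 1) + 1 := by omega
    rw [e1, e2, e3, ← sub_mul, cC_sub μ hμ, hinv]
    rw [show h ^ (-1:ℝ) * (cC μ (k - j - 1 + 1 - 1 + 1) * h ^ μ)
        = cC μ (k - j - 1 + 1 - 1 + 1) * (h ^ (-1:ℝ) * h ^ μ) from by ring, hpow]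
    norm_num


lemma caputoS_Em (h α μ : ℝ) (hh : 0 < h) (hα1 : 0 < α) (hα2 : α ≤ 1) (hμ : α ≤ μ)
    (j n : ℕ) :
    caputoS h α (fun m => Em h μ (j+1) m) n = Em h (μ - α) j n := by
  have hμ0 : 0 < μ := lt_of_lt_of_le hα1 hμ
  unfold caputoS
  split
  · rename_i hlt
    have h1α : (0:ℝ) < 1 - α := by linarith
    have hsum : ∀ k ∈ range (n+1),
        cCoeff (1-α) (n-k) * (h⁻¹ * (Em h μ (j+1) (k+1) - Em h μ (j+1) k))
          = cC (1-α) (n-k) * (if j ≤ k then cC μ (k - j) * h ^ (μ - 1) else 0) := by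
      intro k _
      rw [Em_diff h μ hh hμ0 j k, cCoeff_eq_cC]
    rw [sum_congr rfl hsum]
    by_cases hnj : j ≤ n
    · rw [Em, if_pos hnj]
      have hM : n + 1 - j = (n - j) + 1 := by omega
      have hzero : ∀ x ∈ Ico 0 j,
          cC (1-α) (n-x) * (if j ≤ x then cC μ (x - j) * h ^ (μ - 1) else 0) = 0 := by
        intro x hx
        rw [if_neg (by simp at hx; omega), mul_zero]
      rw [range_eq_Ico,
        ← Finset.sum_Ico_consecutive _ (Nat.zero_le j) (show j ≤ n+1 by omega),
        Finset.sum_eq_zero hzero, zero_add, Finset.sum_Ico_eq_sum_range, hM]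
      have hterm : ∀ i ∈ range ((n-j)+1),
          cC (1-α) (n-(j+i)) * (if j ≤ j+i then cC μ ((j+i) - j) * h ^ (μ - 1) else 0)
            = (cC μ i * cC (1-α) ((n-j)-i)) * h ^ (μ - 1) := by
        intro i hi
        have hi' : i ≤ n - j := by simpa [Nat.lt_succ_iff] using mem_range.1 hi
        rw [if_pos (by omega), show (j+i) - j = i by omega, show n - (j+i) = (n-j) - i by omega]
        ring
      rw [sum_congr rfl hterm, ← sum_mul, vandermonde_gamma (n-j) μ (1-α) hμ0 h1α]
      rw [show h ^ (1-α) * (cC (μ+(1-α)) (n-j) * h ^ (μ-1))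
          = cC (μ+(1-α)) (n-j) * (h ^ (1-α) * h ^ (μ-1)) from by ring,
        ← Real.rpow_add hh, show (1-α) + (μ-1) = μ - α by ring,
        show μ + (1-α) = μ - α + 1 by ring]
    · rw [Em, if_neg hnj]
      have : ∀ k ∈ range (n+1),
          cC (1-α) (n-k) * (if j ≤ k then cC μ (k - j) * h ^ (μ - 1) else 0) = 0 := by
        intro k hk
        have : k ≤ n := by simpa [Nat.lt_succ_iff] using mem_range.1 hk
        rw [if_neg (by omega), mul_zero]
      rw [sum_congr rfl this, Finset.sum_const_zero, mul_zero]
  · rename_i hge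
    have hα : α = 1 := le_antisymm hα2 (not_lt.1 hge)
    rw [Em_diff h μ hh hμ0 j n, hα]
    unfold Em
    split
    · rw [show μ - 1 + 1 = μ by ring]
    · rfl



lemma Em_congr {h : ℝ} {μ1 μ2 : ℝ} (j n : ℕ) (e : μ1 = μ2) : Em h μ1 j n = Em h μ2 j n := by
  rw [e]

lemma Em_one (h : ℝ) (n : ℕ) : Em h 0 0 n = 1 := by
  unfold Em
  rw [if_pos (Nat.zero_le n), Real.rpow_zero, Nat.sub_zero, cC,
    show (0:ℝ) + 1 + n = (n:ℝ) + 1 by ring, show (0:ℝ) + 1 = 1 by ring, Real.Gamma_one,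
    Real.Gamma_nat_eq_factorial]
  have : ((n.factorial : ℝ)) ≠ 0 := by positivity
  field_simp

lemma Em_zero_of_lt {h μ : ℝ} {j n : ℕ} (hn : n < j) : Em h μ j n = 0 := by
  unfold Em; rw [if_neg (by omega)]

section main

variable (h α β : ℝ) {d : ℕ} (A : Matrix (Fin d) (Fin d) ℝ) (xa x0 : Fin d → ℝ)

lemma caputo_congr (γ : ℝ) (u v : ℕ → Fin d → ℝ) (n : ℕ) (hc : ∀ k ≤ n + 1, u k = v k) :
    caputo h γ u n = caputo h γ v n := by
  funext i
  rw [caputo_apply, caputo_apply]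
  exact caputoS_congr h γ _ _ n (fun k hk => by rw [hc k hk])

lemma caputo_fsum (γ : ℝ) {ι : Type*} (s : Finset ι) (F : ι → ℕ → Fin d → ℝ) (n : ℕ) :
    caputo h γ (fun m => ∑ k ∈ s, F k m) n = ∑ k ∈ s, caputo h γ (F k) n := by
  funext i
  rw [caputo_apply]
  have e1 : (fun m => (∑ k ∈ s, F k m) i) = fun m => ∑ k ∈ s, F k m i := by
    funext m; simp
  rw [e1, caputoS_sum, Finset.sum_apply]
  exact sum_congr rfl (fun k _ => (caputo_apply h γ (F k) n i).symm)

lemma caputo_shape (γ : ℝ) (B : Matrix (Fin d) (Fin d) ℝ) (p q : ℕ → ℝ) (n : ℕ) :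
    caputo h γ (fun m => B.mulVec (p m • xa + q m • x0)) n
      = B.mulVec (caputoS h γ p n • xa + caputoS h γ q n • x0) := by
  funext i
  rw [caputo_apply]
  have e1 : (fun m => (B.mulVec (p m • xa + q m • x0)) i)
      = fun m => ∑ j, ((B i j * xa j) * p m + (B i j * x0 j) * q m) := by
    funext m
    simp only [Matrix.mulVec, dotProduct, Pi.add_apply, Pi.smul_apply, smul_eq_mul]
    exact sum_congr rfl (fun j _ => by ring)
  rw [e1, caputoS_sum]
  have e2 : ∀ j ∈ Finset.univ, caputoS h γ (fun m => (B i j * xa j) * p m + (B i j * x0 j) * q m) n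
      = (B i j * xa j) * caputoS h γ p n + (B i j * x0 j) * caputoS h γ q n :=
    fun j _ => caputoS_linear h γ _ _ p q n
  rw [sum_congr rfl e2]
  simp only [Matrix.mulVec, dotProduct, Pi.add_apply, Pi.smul_apply, smul_eq_mul]
  exact sum_congr rfl (fun j _ => by ring)

lemma mulVec_fsum (B : Matrix (Fin d) (Fin d) ℝ) {ι : Type*} (s : Finset ι) (v : ι → Fin d → ℝ) :
    B.mulVec (∑ k ∈ s, v k) = ∑ k ∈ s, B.mulVec (v k) := by
  induction s using Finset.cons_induction with
  | empty => simp
  | cons a s ha ih => rw [Finset.sum_cons, Finset.sum_cons, Matrix.mulVec_add, ih]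

/-- term `k` of the candidate solution -/
noncomputable def Tk (k m : ℕ) : Fin d → ℝ :=
  (A ^ k).mulVec (Em h ((k:ℝ)*α + (k:ℝ)*β) (2*k) m • xa
    + Em h (((k:ℝ)+1)*α + (k:ℝ)*β) (2*k+1) m • x0)

/-- the candidate solution -/
noncomputable def sol (n : ℕ) : Fin d → ℝ := ∑ k ∈ range (n+1), Tk h α β A xa x0 k n

/-- term `k` of `caputo h α sol` -/
noncomputable def Uk (k m : ℕ) : Fin d → ℝ :=
  (A ^ k).mulVec ((if k = 0 then 0 else Em h ((k:ℝ)*α + (k:ℝ)*β - α) (2*k-1) m) • xa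
    + Em h ((k:ℝ)*α + (k:ℝ)*β) (2*k) m • x0)

lemma Tk_zero {k m : ℕ} (hm : m < k) : Tk h α β A xa x0 k m = 0 := by
  unfold Tk
  rw [Em_zero_of_lt (by omega), Em_zero_of_lt (by omega), zero_smul, zero_smul, add_zero,
    Matrix.mulVec_zero]

lemma Uk_zero {k m : ℕ} (hm : m < k) : Uk h α β A xa x0 k m = 0 := by
  unfold Uk
  rw [if_neg (by omega), Em_zero_of_lt (by omega), Em_zero_of_lt (by omega), zero_smul,
    zero_smul, add_zero, Matrix.mulVec_zero]

lemma sol_window (N n : ℕ) (hn : n < N) :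
    sol h α β A xa x0 n = ∑ k ∈ range N, Tk h α β A xa x0 k n := by
  unfold sol
  apply Finset.sum_subset (Finset.range_subset_range.2 (by omega))
  intro k _ hk
  exact Tk_zero h α β A xa x0 (by simp at hk ⊢; omega)

lemma Uk_window (N n : ℕ) (hn : n + 2 ≤ N) :
    ∑ k ∈ range (n+2), Uk h α β A xa x0 k n = ∑ k ∈ range N, Uk h α β A xa x0 k n := by
  apply Finset.sum_subset (Finset.range_subset_range.2 (by omega))
  intro k _ hk
  exact Uk_zero h α β A xa x0 (by simp at hk ⊢; omega)

end main



section comp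

variable (h α β : ℝ) {d : ℕ} (A : Matrix (Fin d) (Fin d) ℝ) (xa x0 : Fin d → ℝ)

lemma caputo_Tk (hh : 0 < h) (hα1 : 0 < α) (hα2 : α ≤ 1) (hβ1 : 0 < β) (k n : ℕ) :
    caputo h α (Tk h α β A xa x0 k) n = Uk h α β A xa x0 k n := by
  have hTk : Tk h α β A xa x0 k = fun m => (A ^ k).mulVec
      ((fun m' => Em h ((k:ℝ)*α + (k:ℝ)*β) (2*k) m') m • xa
        + (fun m' => Em h (((k:ℝ)+1)*α + (k:ℝ)*β) (2*k+1) m') m • x0) := rfl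
  rw [hTk, caputo_shape]
  unfold Uk
  have hq : caputoS h α (fun m' => Em h (((k:ℝ)+1)*α + (k:ℝ)*β) (2*k+1) m') n
      = Em h ((k:ℝ)*α + (k:ℝ)*β) (2*k) n := by
    rw [caputoS_Em h α _ hh hα1 hα2 (by nlinarith [Nat.cast_nonneg (α := ℝ) k]) (2*k) n]
    exact Em_congr _ _ (by ring)
  have hp : caputoS h α (fun m' => Em h ((k:ℝ)*α + (k:ℝ)*β) (2*k) m') n
      = (if k = 0 then 0 else Em h ((k:ℝ)*α + (k:ℝ)*β - α) (2*k-1) n) := by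
    rcases k with _ | k'
    · rw [if_pos rfl]
      apply caputoS_const h α 1
      intro m
      rw [Em_congr (h := h) _ _ (show ((0:ℕ):ℝ)*α + ((0:ℕ):ℝ)*β = 0 by push_cast; ring)]
      simpa using Em_one h m
    · rw [if_neg (by omega)]
      have e : (fun m' => Em h (((k'+1:ℕ):ℝ)*α + ((k'+1:ℕ):ℝ)*β) (2*(k'+1)) m')
          = fun m' => Em h (((k'+1:ℕ):ℝ)*α + ((k'+1:ℕ):ℝ)*β) ((2*k'+1)+1) m' := by
        funext m'; rw [show 2*(k'+1) = (2*k'+1)+1 by omega]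
      rw [e, caputoS_Em h α _ hh hα1 hα2
        (by push_cast; nlinarith [Nat.cast_nonneg (α := ℝ) k', hβ1]) (2*k'+1) n]
      rw [show 2*(k'+1)-1 = 2*k'+1 by omega]
  rw [hp, hq]

lemma caputo_sol (hh : 0 < h) (hα1 : 0 < α) (hα2 : α ≤ 1) (hβ1 : 0 < β) (n : ℕ) :
    caputo h α (sol h α β A xa x0) n = ∑ k ∈ range (n+2), Uk h α β A xa x0 k n := by
  rw [caputo_congr h _ (sol h α β A xa x0) (fun m => ∑ k ∈ range (n+2), Tk h α β A xa x0 k m) n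
    (fun m hm => sol_window h α β A xa x0 (n+2) m (by omega)), caputo_fsum]
  exact sum_congr rfl (fun k _ => caputo_Tk h α β A xa x0 hh hα1 hα2 hβ1 k n)

lemma caputo_Uk_succ (hh : 0 < h) (hα1 : 0 < α) (hβ1 : 0 < β) (hβ2 : β ≤ 1) (k' n : ℕ) :
    caputo h β (Uk h α β A xa x0 (k'+1)) n = A.mulVec (Tk h α β A xa x0 k' n) := by
  have hUk : Uk h α β A xa x0 (k'+1) = fun m => (A ^ (k'+1)).mulVec
      ((fun m' => (if k'+1 = 0 then 0 else Em h (((k'+1:ℕ):ℝ)*α + ((k'+1:ℕ):ℝ)*β - α) (2*(k'+1)-1) m')) m • xa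
        + (fun m' => Em h (((k'+1:ℕ):ℝ)*α + ((k'+1:ℕ):ℝ)*β) (2*(k'+1)) m') m • x0) := rfl
  rw [hUk, caputo_shape]
  have hp : caputoS h β (fun m' => (if k'+1 = 0 then 0 else Em h (((k'+1:ℕ):ℝ)*α + ((k'+1:ℕ):ℝ)*β - α) (2*(k'+1)-1) m')) n
      = Em h ((k':ℝ)*α + (k':ℝ)*β) (2*k') n := by
    have e : (fun m' => (if k'+1 = 0 then (0:ℝ) else Em h (((k'+1:ℕ):ℝ)*α + ((k'+1:ℕ):ℝ)*β - α) (2*(k'+1)-1) m'))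
        = fun m' => Em h (((k'+1:ℕ):ℝ)*α + ((k'+1:ℕ):ℝ)*β - α) (2*k'+1) m' := by
      funext m'
      rw [if_neg (by omega), show 2*(k'+1)-1 = 2*k'+1 by omega]
    rw [e, caputoS_Em h β _ hh hβ1 hβ2
      (by push_cast; nlinarith [Nat.cast_nonneg (α := ℝ) k', hα1]) (2*k') n]
    exact Em_congr _ _ (by push_cast; ring)
  have hq : caputoS h β (fun m' => Em h (((k'+1:ℕ):ℝ)*α + ((k'+1:ℕ):ℝ)*β) (2*(k'+1)) m') n
      = Em h (((k':ℝ)+1)*α + (k':ℝ)*β) (2*k'+1) n := by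
    have e : (fun m' => Em h (((k'+1:ℕ):ℝ)*α + ((k'+1:ℕ):ℝ)*β) (2*(k'+1)) m')
        = fun m' => Em h (((k'+1:ℕ):ℝ)*α + ((k'+1:ℕ):ℝ)*β) ((2*k'+1)+1) m' := by
      funext m'; rw [show 2*(k'+1) = (2*k'+1)+1 by omega]
    rw [e, caputoS_Em h β _ hh hβ1 hβ2
      (by push_cast; nlinarith [Nat.cast_nonneg (α := ℝ) k', hα1]) (2*k'+1) n]
    exact Em_congr _ _ (by push_cast; ring)
  rw [hp, hq, pow_succ', ← Matrix.mulVec_mulVec]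
  rfl

lemma caputo_Uk_zero (hh : 0 < h) (hβ1 : 0 < β) (hβ2 : β ≤ 1) (n : ℕ) :
    caputo h β (Uk h α β A xa x0 0) n = 0 := by
  have hUk : Uk h α β A xa x0 0 = fun m => (A ^ 0).mulVec
      ((fun _ => (0:ℝ)) m • xa + (fun m' => Em h (((0:ℕ):ℝ)*α + ((0:ℕ):ℝ)*β) 0 m') m • x0) := by
    funext m
    unfold Uk
    rw [if_pos rfl]
  rw [hUk, caputo_shape]
  rw [caputoS_const h β 0 _ (fun _ => rfl) n]
  rw [caputoS_const h β 1 _ (fun m => by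
    rw [Em_congr (h := h) _ _ (show ((0:ℕ):ℝ)*α + ((0:ℕ):ℝ)*β = 0 by push_cast; ring)]
    simpa using Em_one h m) n]
  rw [zero_smul, zero_smul, add_zero, Matrix.mulVec_zero]

end comp


section solivp

variable (h α β : ℝ) {d : ℕ} (A : Matrix (Fin d) (Fin d) ℝ) (xa x0 : Fin d → ℝ)

lemma sol_isSol (hh : 0 < h) (hα1 : 0 < α) (hα2 : α ≤ 1) (hβ1 : 0 < β) (hβ2 : β ≤ 1) :
    IsSolIVP h α β (fun _ x => A.mulVec x) xa x0 (sol h α β A xa x0) := by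
  refine ⟨fun n => ?_, ?_, ?_⟩
  · -- equation
    rw [caputo_congr h _ (caputo h α (sol h α β A xa x0))
      (fun m => ∑ k ∈ range (n+3), Uk h α β A xa x0 k m) n
      (fun m hm => by
        rw [caputo_sol h α β A xa x0 hh hα1 hα2 hβ1 m]
        exact Uk_window h α β A xa x0 (n+3) m (by omega)),
      caputo_fsum]
    rw [Finset.sum_range_succ' _ (n+2)]
    rw [caputo_Uk_zero h α β A xa x0 hh hβ1 hβ2 n, add_zero]
    rw [sum_congr rfl (fun k' _ => caputo_Uk_succ h α β A xa x0 hh hα1 hβ1 hβ2 k' n)]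
    rw [← mulVec_fsum]
    rw [← sol_window h α β A xa x0 (n+2) n (by omega)]
  · -- X 0 = xa
    unfold sol
    rw [Finset.sum_range_one]
    unfold Tk
    rw [Em_zero_of_lt (show (0:ℕ) < 2*0+1 by omega), zero_smul, add_zero,
      Em_congr (h := h) _ _ (show ((0:ℕ):ℝ)*α + ((0:ℕ):ℝ)*β = 0 by push_cast; ring)]
    simp [Em_one h 0, Matrix.one_mulVec]
  · -- caputo α X 0 = x0
    rw [caputo_sol h α β A xa x0 hh hα1 hα2 hβ1 0]
    rw [show (0:ℕ)+2 = 2 by rfl, Finset.sum_range_succ, Finset.sum_range_one]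
    unfold Uk
    rw [if_pos rfl, if_neg (by omega)]
    rw [Em_zero_of_lt (show (0:ℕ) < 2*1-1 by omega), Em_zero_of_lt (show (0:ℕ) < 2*1 by omega)]
    rw [Em_congr (h := h) _ _ (show ((0:ℕ):ℝ)*α + ((0:ℕ):ℝ)*β = 0 by push_cast; ring)]
    simp [Em_one h 0, Matrix.one_mulVec]

lemma sol_unique (hh : 0 < h) (hα1 : 0 < α) (hα2 : α ≤ 1) (hβ1 : 0 < β) (hβ2 : β ≤ 1)
    (f : ℕ → (Fin d → ℝ) → Fin d → ℝ) (X Y : ℕ → Fin d → ℝ)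
    (hX : IsSolIVP h α β f xa x0 X) (hY : IsSolIVP h α β f xa x0 Y) : ∀ n, X n = Y n := by
  have hpow : ∀ γ : ℝ, h ^ (-γ) ≠ 0 := fun γ => ne_of_gt (Real.rpow_pos_of_pos hh _)
  intro n
  induction n using Nat.strong_induction_on with
  | _ n ih =>
    match n with
    | 0 => rw [hX.2.1, hY.2.1]
    | 1 =>
      funext i
      have h0 : X 0 = Y 0 := by rw [hX.2.1, hY.2.1]
      have hc : caputo h α X 0 = caputo h α Y 0 := by rw [hX.2.2, hY.2.2]
      have := caputoS_top h α hh hα1 hα2 (fun m => X m i) (fun m => Y m i) 0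
        (fun k hk => by interval_cases k; exact congrFun h0 i)
      rw [show caputoS h α (fun m => X m i) 0 = caputo h α X 0 i from
          (caputo_apply h α X 0 i).symm,
        show caputoS h α (fun m => Y m i) 0 = caputo h α Y 0 i from
          (caputo_apply h α Y 0 i).symm, hc, sub_self] at this
      have := (mul_eq_zero.1 this.symm).resolve_left (hpow α)
      have : X 1 i = Y 1 i := by linarith [sub_eq_zero.1 this]
      simpa using this
    | (m+2) =>
      have hagree : ∀ k ≤ m+1, X k = Y k := fun k hk => ih k (by omega)
      have hU : ∀ k ≤ m, caputo h α X k = caputo h α Y k := fun k hk =>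
        caputo_congr h α X Y k (fun j hj => hagree j (by omega))
      have heq : caputo h β (caputo h α X) m = caputo h β (caputo h α Y) m := by
        rw [hX.1 m, hY.1 m, hagree m (by omega)]
      have hU1 : caputo h α X (m+1) = caputo h α Y (m+1) := by
        funext i
        have := caputoS_top h β hh hβ1 hβ2 (fun j => caputo h α X j i)
          (fun j => caputo h α Y j i) m (fun k hk => congrFun (hU k hk) i)
        rw [show caputoS h β (fun j => caputo h α X j i) m = caputo h β (caputo h α X) m i from
            (caputo_apply h β _ m i).symm,
          show caputoS h β (fun j => caputo h α Y j i) m = caputo h β (caputo h α Y) m i from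
            (caputo_apply h β _ m i).symm, heq, sub_self] at this
        have := (mul_eq_zero.1 this.symm).resolve_left (hpow β)
        linarith [sub_eq_zero.1 this]
      funext i
      have := caputoS_top h α hh hα1 hα2 (fun j => X j i) (fun j => Y j i) (m+1)
        (fun k hk => congrFun (hagree k hk) i)
      rw [show caputoS h α (fun j => X j i) (m+1) = caputo h α X (m+1) i from
          (caputo_apply h α _ _ i).symm,
        show caputoS h α (fun j => Y j i) (m+1) = caputo h α Y (m+1) i from
          (caputo_apply h α _ _ i).symm, hU1, sub_self] at this
      have := (mul_eq_zero.1 this.symm).resolve_left (hpow α)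
      linarith [sub_eq_zero.1 this]

end solivp


lemma phi_Em1 (h α β : ℝ) (k n : ℕ) :
    phi h α β k k ((n : ℤ) - (k : ℤ)) = Em h ((k:ℝ)*α + (k:ℝ)*β) (2*k) n := by
  unfold phi Em
  by_cases hkn : 2*k ≤ n
  · rw [if_pos (by omega), if_pos hkn, cC, ← Real.Gamma_nat_eq_factorial (n - 2*k)]
    have h2k : ((n - 2*k : ℕ):ℝ) = (n:ℝ) - 2*k := by
      rw [Nat.cast_sub hkn]; push_cast; ring
    have e1 : ((((n:ℤ) - (k:ℤ)):ℤ):ℝ) = (n:ℝ) - k := by push_cast; ring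
    rw [e1, h2k,
      show (n:ℝ) - k - k + 1 + (k:ℝ)*α + (k:ℝ)*β
        = (k:ℝ)*α + (k:ℝ)*β + 1 + ((n:ℝ) - 2*k) from by ring,
      show (n:ℝ) - k - k + 1 = ((n:ℝ) - 2*k) + 1 from by ring]
  · rw [if_neg (by omega), if_neg hkn]

lemma phi_Em2 (h α β : ℝ) (k n : ℕ) :
    phi h α β (k+1) k ((n : ℤ) - (k : ℤ)) = Em h (((k:ℝ)+1)*α + (k:ℝ)*β) (2*k+1) n := by
  unfold phi Em
  by_cases hkn : 2*k+1 ≤ n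
  · rw [if_pos (by omega), if_pos hkn, cC, ← Real.Gamma_nat_eq_factorial (n - (2*k+1))]
    have h2k : ((n - (2*k+1) : ℕ):ℝ) = (n:ℝ) - (2*k+1) := by
      rw [Nat.cast_sub hkn]; push_cast; ring
    have e1 : ((((n:ℤ) - (k:ℤ)):ℤ):ℝ) = (n:ℝ) - k := by push_cast; ring
    have e2 : (((k+1:ℕ)):ℝ) = (k:ℝ) + 1 := by push_cast; ring
    rw [e1, e2, h2k,
      show (n:ℝ) - k - ((k:ℝ)+1) + 1 + ((k:ℝ)+1)*α + (k:ℝ)*β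
        = ((k:ℝ)+1)*α + (k:ℝ)*β + 1 + ((n:ℝ) - (2*k+1)) from by ring,
      show (n:ℝ) - k - ((k:ℝ)+1) + 1 = ((n:ℝ) - (2*k+1)) + 1 from by ring]
  · rw [if_neg (by omega), if_neg hkn]


theorem linear_ivp_solution (h α β : ℝ) (hh : 0 < h)
    (hα1 : 0 < α) (hα2 : α ≤ 1) (hβ1 : 0 < β) (hβ2 : β ≤ 1)
    (d : ℕ) (hd : 1 ≤ d) (A : Matrix (Fin d) (Fin d) ℝ) (xa x0 : Fin d → ℝ)
    (X : ℕ → Fin d → ℝ) (hX : IsSolIVP h α β (fun _ x => A.mulVec x) xa x0 X) (n : ℕ) :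
    X n = ∑ k ∈ Finset.range (n + 1),
      (A ^ k).mulVec
        (phi h α β k k ((n : ℤ) - (k : ℤ)) • xa
          + phi h α β (k + 1) k ((n : ℤ) - (k : ℤ)) • x0) := by
  have hsol := sol_isSol h α β A xa x0 hh hα1 hα2 hβ1 hβ2
  rw [sol_unique h α β xa x0 hh hα1 hα2 hβ1 hβ2 _ X (sol h α β A xa x0) hX hsol n]
  unfold sol
  apply sum_congr rfl
  intro k _
  rw [phi_Em1, phi_Em2]
  rfl
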